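/- arXiv:2003.03087 — 4 statements merged into one kernel-verified Lean document; each statement's English description precedes it below -/
import Mathlib

section
/- Let κ ∈ ℝ, n ≥ 2, R > 0 (with R < π/√κ if κ > 0), λ ∈ ℝ, and α < 0 with α ≥ −2 sn_κ'(R)/sn_κ(R). Suppose F : [0,R] → ℝ is a C² solution of F'' + (n−1)(sn_κ'/sn_κ) F' + (λ − (n−1)/sn_κ²) F = 0 with F(0) = 0, F'(0) = 1, F > 0 on (0,R], F' > 0 on [0,R], and F'(R) = −α F(R). Then F'(r)/F(r) ≥ −α for all r ∈ (0, R]. -/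
noncomputable def sn (κ t : ℝ) : ℝ :=
  if 0 < κ then Real.sin (Real.sqrt κ * t) / Real.sqrt κ
  else if κ = 0 then t
  else Real.sinh (Real.sqrt (-κ) * t) / Real.sqrt (-κ)

noncomputable def snc (κ t : ℝ) : ℝ :=
  if 0 < κ then Real.cos (Real.sqrt κ * t)
  else if κ = 0 then 1
  else Real.cosh (Real.sqrt (-κ) * t)

private lemma hasDerivAt_cmul (c t : ℝ) : HasDerivAt (fun x : ℝ => c * x) c t := by
  simpa using (hasDerivAt_id t).const_mul c

lemma sn_hasDerivAt (κ t : ℝ) : HasDerivAt (sn κ) (snc κ t) t := by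
  rcases lt_trichotomy 0 κ with hκ | hκ | hκ
  · have h0 : Real.sqrt κ ≠ 0 := by positivity
    have hfun : sn κ = fun t => Real.sin (Real.sqrt κ * t) / Real.sqrt κ := by
      funext x; simp [sn, hκ]
    have hval : snc κ t = Real.cos (Real.sqrt κ * t) := by simp [snc, hκ]
    rw [hfun, hval]
    have := ((hasDerivAt_cmul (Real.sqrt κ) t).sin).div_const (Real.sqrt κ)
    simpa [mul_div_assoc, div_self h0] using this
  · have hfun : sn κ = fun t => t := by funext x; simp [sn, ← hκ]
    have hval : snc κ t = 1 := by simp [snc, ← hκ]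
    rw [hfun, hval]; exact hasDerivAt_id t
  · have hκ' : ¬ 0 < κ := by linarith
    have hκ'' : κ ≠ 0 := by linarith
    have h0 : Real.sqrt (-κ) ≠ 0 := by
      have : (0:ℝ) < -κ := by linarith
      positivity
    have hfun : sn κ = fun t => Real.sinh (Real.sqrt (-κ) * t) / Real.sqrt (-κ) := by
      funext x; simp [sn, hκ', hκ'']
    have hval : snc κ t = Real.cosh (Real.sqrt (-κ) * t) := by simp [snc, hκ', hκ'']
    rw [hfun, hval]
    have := ((hasDerivAt_cmul (Real.sqrt (-κ)) t).sinh).div_const (Real.sqrt (-κ))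
    simpa [mul_div_assoc, div_self h0] using this

lemma deriv_sn (κ t : ℝ) : deriv (sn κ) t = snc κ t := (sn_hasDerivAt κ t).deriv

lemma snc_hasDerivAt (κ t : ℝ) : HasDerivAt (snc κ) (-κ * sn κ t) t := by
  rcases lt_trichotomy 0 κ with hκ | hκ | hκ
  · have hsq : Real.sqrt κ * Real.sqrt κ = κ := Real.mul_self_sqrt hκ.le
    have h0 : Real.sqrt κ ≠ 0 := by positivity
    have hfun : snc κ = fun t => Real.cos (Real.sqrt κ * t) := by funext x; simp [snc, hκ]
    have hval : sn κ t = Real.sin (Real.sqrt κ * t) / Real.sqrt κ := by simp [sn, hκ]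
    rw [hfun, hval]
    have := (hasDerivAt_cmul (Real.sqrt κ) t).cos
    have he : -Real.sin (Real.sqrt κ * t) * Real.sqrt κ
        = -κ * (Real.sin (Real.sqrt κ * t) / Real.sqrt κ) := by
      field_simp
      linear_combination (-Real.sin (Real.sqrt κ * t)) * hsq
    rwa [he] at this
  · have hfun : snc κ = fun _ => (1:ℝ) := by funext x; simp [snc, ← hκ]
    have hval : -κ * sn κ t = 0 := by rw [← hκ]; ring
    rw [hfun, hval]; exact hasDerivAt_const t 1
  · have hκ' : ¬ 0 < κ := by linarith
    have hκ'' : κ ≠ 0 := by linarith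
    have hpos : (0:ℝ) < -κ := by linarith
    have hsq : Real.sqrt (-κ) * Real.sqrt (-κ) = -κ := Real.mul_self_sqrt hpos.le
    have h0 : Real.sqrt (-κ) ≠ 0 := by positivity
    have hfun : snc κ = fun t => Real.cosh (Real.sqrt (-κ) * t) := by
      funext x; simp [snc, hκ', hκ'']
    have hval : sn κ t = Real.sinh (Real.sqrt (-κ) * t) / Real.sqrt (-κ) := by
      simp [sn, hκ', hκ'']
    rw [hfun, hval]
    have := (hasDerivAt_cmul (Real.sqrt (-κ)) t).cosh
    have he : Real.sinh (Real.sqrt (-κ) * t) * Real.sqrt (-κ)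
        = -κ * (Real.sinh (Real.sqrt (-κ) * t) / Real.sqrt (-κ)) := by
      field_simp
      linear_combination Real.sinh (Real.sqrt (-κ) * t) * hsq
    rwa [he] at this

lemma sn_pyth (κ t : ℝ) : snc κ t ^ 2 + κ * sn κ t ^ 2 = 1 := by
  rcases lt_trichotomy 0 κ with hκ | hκ | hκ
  · have hsq : Real.sqrt κ ^ 2 = κ := Real.sq_sqrt hκ.le
    have h0 : Real.sqrt κ ≠ 0 := by positivity
    simp only [sn, snc, if_pos hκ, div_pow, hsq]
    rw [mul_div_cancel₀ _ (by positivity : κ ≠ 0), add_comm]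
    exact Real.sin_sq_add_cos_sq _
  · simp [sn, snc, ← hκ]
  · have hκ' : ¬ 0 < κ := by linarith
    have hκ'' : κ ≠ 0 := by linarith
    have hpos : (0:ℝ) < -κ := by linarith
    have hsq : Real.sqrt (-κ) ^ 2 = -κ := Real.sq_sqrt hpos.le
    have h0 : Real.sqrt (-κ) ≠ 0 := by positivity
    simp only [sn, snc, if_neg hκ', if_neg hκ'', div_pow, hsq]
    have := Real.cosh_sq_sub_sinh_sq (Real.sqrt (-κ) * t)
    have hne : -κ ≠ 0 := ne_of_gt hpos
    field_simp
    linear_combination this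

lemma sn_pos {κ R t : ℝ} (hRκ : 0 < κ → R < Real.pi / Real.sqrt κ)
    (ht : 0 < t) (htR : t ≤ R) : 0 < sn κ t := by
  rcases lt_trichotomy 0 κ with hκ | hκ | hκ
  · have hs : (0:ℝ) < Real.sqrt κ := Real.sqrt_pos.2 hκ
    have h1 : 0 < Real.sqrt κ * t := by positivity
    have h2 : Real.sqrt κ * t < Real.pi := by
      have htπ : t < Real.pi / Real.sqrt κ := lt_of_le_of_lt htR (hRκ hκ)
      calc Real.sqrt κ * t < Real.sqrt κ * (Real.pi / Real.sqrt κ) :=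
            mul_lt_mul_of_pos_left htπ hs
        _ = Real.pi := by field_simp
    have := Real.sin_pos_of_pos_of_lt_pi h1 h2
    simp only [sn, if_pos hκ]
    positivity
  · simp only [sn, ← hκ, lt_irrefl, if_neg, if_pos rfl]
    simpa using ht
  · have hκ' : ¬ 0 < κ := by linarith
    have hκ'' : κ ≠ 0 := by linarith
    have hpos : (0:ℝ) < -κ := by linarith
    have hs : (0:ℝ) < Real.sqrt (-κ) := Real.sqrt_pos.2 hpos
    have h1 : 0 < Real.sqrt (-κ) * t := by positivity
    have := Real.sinh_pos_iff.2 h1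
    simp only [sn, if_neg hκ', if_neg hκ'']
    positivity

private lemma hasDerivAt_cmul' (c t : ℝ) : HasDerivAt (fun x : ℝ => c * x) c t := by
  simpa using (hasDerivAt_id t).const_mul c

private lemma phi_deriv_eq (p : ℕ) (ν m lam a b c s s' e : ℝ) (hs : s ≠ 0)
    (hν : ν = (p:ℝ)+1)
    (hode : c + ν * (s'/s) * b + (lam - ν/s^2) * a = 0) :
    (c - m*b) * (s^(p+1) * e) + (b - m*a) * ((((p:ℝ)+1) * s^p * s') * e + s^(p+1) * (e*m))
      = e * s^p * (a * (s * (ν/s^2 - ν*m*(s'/s) - m^2 - lam))) := by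
  subst hν
  have hc : c = -((((p:ℝ)+1) * (s'/s)) * b) - (lam - ((p:ℝ)+1)/s^2) * a := by linarith
  rw [hc]
  field_simp
  ring

set_option maxHeartbeats 2000000 in
open Topology Filter in
/-- Proposition 2.1(2): for −2 sn_κ'(R)/sn_κ(R) ≤ α < 0, the radial part F of the
second Robin eigenfunction satisfies F'/F ≥ −α on (0, R]. -/
theorem deriv_div_ge_of_robin_radial (κ : ℝ) (n : ℕ) (hn : 2 ≤ n) (R : ℝ) (hR : 0 < R)
    (hRκ : 0 < κ → R < Real.pi / Real.sqrt κ) (lam α : ℝ) (hα : α < 0)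
    (hα2 : -2 * deriv (sn κ) R / sn κ R ≤ α)
    (F : ℝ → ℝ) (hF : ContDiffOn ℝ 2 F (Set.Icc 0 R))
    (hode : ∀ r ∈ Set.Ioc (0 : ℝ) R,
      deriv (deriv F) r + ((n : ℝ) - 1) * (deriv (sn κ) r / sn κ r) * deriv F r
        + (lam - ((n : ℝ) - 1) / (sn κ r) ^ 2) * F r = 0)
    (hF0 : F 0 = 0) (hF'0 : deriv F 0 = 1)
    (hFpos : ∀ r ∈ Set.Ioc (0 : ℝ) R, 0 < F r)
    (hF'pos : ∀ r ∈ Set.Icc (0 : ℝ) R, 0 < deriv F r)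
    (hbc : deriv F R = -α * F R) :
    ∀ r ∈ Set.Ioc (0 : ℝ) R, -α ≤ deriv F r / F r := by
  obtain ⟨p, rfl⟩ : ∃ p, n = p + 2 := ⟨n - 2, by omega⟩
  set ν : ℝ := (p : ℝ) + 1 with hνdef
  have hνode : ((p + 2 : ℕ) : ℝ) - 1 = ν := by push_cast [hνdef]; ring
  rw [hνode] at hode
  have hνpos : 0 < ν := by positivity
  intro r1 hr1
  by_contra hcon
  push_neg at hcon
  set v : ℝ → ℝ := fun t => deriv F t / F t with hv
  -- basic positivity
  have hsnpos : ∀ t ∈ Set.Ioc (0:ℝ) R, 0 < sn κ t := fun t ht => sn_pos hRκ ht.1 ht.2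
  have hFR : 0 < F R := hFpos R ⟨hR, le_rfl⟩
  have hvR : deriv F R / F R = -α := by rw [hbc]; field_simp
  have hr1R : r1 < R := by
    rcases eq_or_lt_of_le hr1.2 with h | h
    · exfalso; rw [h, hvR] at hcon; exact lt_irrefl _ hcon
    · exact h
  -- regularity on the open interval
  have hFIoo : ContDiffOn ℝ 2 F (Set.Ioo 0 R) := hF.mono Set.Ioo_subset_Icc_self
  have hC1 : ContDiffOn ℝ 1 (deriv F) (Set.Ioo 0 R) :=
    hFIoo.deriv_of_isOpen isOpen_Ioo (by norm_num)
  have hdF : ∀ t ∈ Set.Ioo (0:ℝ) R, HasDerivAt F (deriv F t) t := by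
    intro t ht
    exact ((hFIoo.differentiableOn (by norm_num)).differentiableAt
      (isOpen_Ioo.mem_nhds ht)).hasDerivAt
  have hddF : ∀ t ∈ Set.Ioo (0:ℝ) R, HasDerivAt (deriv F) (deriv (deriv F) t) t := by
    intro t ht
    exact ((hC1.differentiableOn (by norm_num)).differentiableAt
      (isOpen_Ioo.mem_nhds ht)).hasDerivAt
  have hcontdF : ContinuousOn (deriv F) (Set.Ioo 0 R) := hC1.continuousOn
  have hcontF : ContinuousOn F (Set.Icc 0 R) := hF.continuousOn
  -- endpoint filters
  have hfilR : 𝓝[Set.Ioo (0:ℝ) R] R = 𝓝[<] R := by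
    rw [← Set.Ioi_inter_Iio]
    exact nhdsWithin_inter_of_mem (nhdsWithin_le_nhds (Ioi_mem_nhds hR))
  have hfil0 : 𝓝[Set.Ioo (0:ℝ) R] 0 = 𝓝[>] (0:ℝ) := by
    rw [← Set.Ioi_inter_Iio]
    exact nhdsWithin_inter_of_mem' (nhdsWithin_le_nhds (Iio_mem_nhds hR))
  -- derivWithin agrees with deriv on Ioo, and is continuous up to the boundary
  have hgcont : ContinuousOn (derivWithin F (Set.Icc 0 R)) (Set.Icc 0 R) :=
    hF.continuousOn_derivWithin (uniqueDiffOn_Icc hR) (by norm_num)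
  have heqg : ∀ t ∈ Set.Ioo (0:ℝ) R, derivWithin F (Set.Icc 0 R) t = deriv F t := by
    intro t ht
    exact derivWithin_of_mem_nhds (Icc_mem_nhds ht.1 ht.2)
  have hdiffR : DifferentiableAt ℝ F R := by
    by_contra h
    rw [deriv_zero_of_not_differentiableAt h] at hbc
    nlinarith
  have hdiff0 : DifferentiableAt ℝ F 0 := by
    by_contra h
    rw [deriv_zero_of_not_differentiableAt h] at hF'0
    norm_num at hF'0
  have htendR : Filter.Tendsto (deriv F) (𝓝[Set.Ioo (0:ℝ) R] R) (𝓝 (deriv F R)) := by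
    have h1 : Filter.Tendsto (derivWithin F (Set.Icc 0 R)) (𝓝[Set.Ioo (0:ℝ) R] R)
        (𝓝 (derivWithin F (Set.Icc 0 R) R)) :=
      (hgcont R ⟨hR.le, le_rfl⟩).mono Set.Ioo_subset_Icc_self
    rw [hdiffR.derivWithin ((uniqueDiffOn_Icc hR) R ⟨hR.le, le_rfl⟩)] at h1
    refine h1.congr' ?_
    filter_upwards [eventually_mem_nhdsWithin] with t ht using (heqg t ht)
  have htend0 : Filter.Tendsto (deriv F) (𝓝[Set.Ioo (0:ℝ) R] 0) (𝓝 1) := by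
    have h1 : Filter.Tendsto (derivWithin F (Set.Icc 0 R)) (𝓝[Set.Ioo (0:ℝ) R] 0)
        (𝓝 (derivWithin F (Set.Icc 0 R) 0)) :=
      (hgcont 0 ⟨le_rfl, hR.le⟩).mono Set.Ioo_subset_Icc_self
    rw [hdiff0.derivWithin ((uniqueDiffOn_Icc hR) 0 ⟨le_rfl, hR.le⟩), hF'0] at h1
    refine h1.congr' ?_
    filter_upwards [eventually_mem_nhdsWithin] with t ht using (heqg t ht)
  have htendF0 : Filter.Tendsto F (𝓝[Set.Ioo (0:ℝ) R] 0) (𝓝 0) := by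
    have h2 : Filter.Tendsto F (𝓝[Set.Ioo (0:ℝ) R] 0) (𝓝 (F 0)) :=
      (hcontF 0 ⟨le_rfl, hR.le⟩).mono (Set.Ioo_subset_Icc_self)
    rwa [hF0] at h2
  -- Step A : choose ε close to 0 with v ε > -α
  have hNB0 : (𝓝[Set.Ioo (0:ℝ) R] 0).NeBot := by rw [hfil0]; infer_instance
  obtain ⟨ε, hεmem, hεr1, hεd, hεF⟩ :
      ∃ ε, ε ∈ Set.Ioo (0:ℝ) R ∧ ε < r1 ∧ 1/2 < deriv F ε ∧ F ε < 1/(2*(-α)) := by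
    have e1 : ∀ᶠ t in 𝓝[Set.Ioo (0:ℝ) R] 0, 1/2 < deriv F t :=
      htend0.eventually (eventually_gt_nhds (by norm_num))
    have e2 : ∀ᶠ t in 𝓝[Set.Ioo (0:ℝ) R] 0, F t < 1/(2*(-α)) :=
      htendF0.eventually (eventually_lt_nhds (div_pos one_pos (by linarith)))
    have e3 : ∀ᶠ t in 𝓝[Set.Ioo (0:ℝ) R] 0, t < r1 :=
      ((eventually_lt_nhds hr1.1).filter_mono nhdsWithin_le_nhds)
    have e4 : ∀ᶠ t in 𝓝[Set.Ioo (0:ℝ) R] 0, t ∈ Set.Ioo (0:ℝ) R :=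
      eventually_mem_nhdsWithin
    obtain ⟨ε, h1, h2, h3, h4⟩ := (e1.and (e2.and (e3.and e4))).exists
    exact ⟨ε, h4, h3, h1, h2⟩
  have hvε : -α < v ε := by
    have hFε : 0 < F ε := hFpos ε ⟨hεmem.1, hεmem.2.le⟩
    have hαpos : 0 < -α := by linarith
    have hα0 : α ≠ 0 := ne_of_lt hα
    have h5 : -α * (1/(2*(-α))) = 1/2 := by field_simp
    have h6 := mul_lt_mul_of_pos_left hεF hαpos
    show -α < deriv F ε / F ε
    rw [lt_div_iff₀ hFε]
    linarith
  -- Step B : minimum of v on [ε, R'] where R' = (r1+R)/2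
  set R' : ℝ := (r1 + R)/2 with hR'def
  have hr1R' : r1 < R' := by rw [hR'def]; linarith
  have hR'R : R' < R := by rw [hR'def]; linarith
  have hsub : Set.Icc ε R' ⊆ Set.Ioo 0 R := fun x hx =>
    ⟨lt_of_lt_of_le hεmem.1 hx.1, lt_of_le_of_lt hx.2 hR'R⟩
  have hvcont : ContinuousOn v (Set.Icc ε R') := by
    apply ContinuousOn.div (hcontdF.mono hsub)
      ((hcontF.mono (hsub.trans Set.Ioo_subset_Icc_self)))
    intro x hx
    exact ne_of_gt (hFpos x ⟨(hsub hx).1, (hsub hx).2.le⟩)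
  have hne : (Set.Icc ε R').Nonempty := ⟨ε, le_rfl, by linarith⟩
  obtain ⟨r0, hr0mem, hr0min⟩ := isCompact_Icc.exists_isMinOn hne hvcont
  set m : ℝ := v r0 with hmdef
  have hr1mem : r1 ∈ Set.Icc ε R' := ⟨hεr1.le, hr1R'.le⟩
  have hmr1 : m ≤ v r1 := hr0min hr1mem
  have hmα : m < -α := lt_of_le_of_lt hmr1 hcon
  have hr0ε : ε < r0 := by
    rcases eq_or_lt_of_le hr0mem.1 with h | h
    · exfalso; rw [h] at hvε; rw [← hmdef] at hvε; linarith
    · exact h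
  have hr0Ioo : r0 ∈ Set.Ioo (0:ℝ) R := hsub hr0mem
  have hr0R : r0 < R := hr0Ioo.2
  have hFr0 : 0 < F r0 := hFpos r0 ⟨hr0Ioo.1, hr0Ioo.2.le⟩
  have hbma : deriv F r0 = m * F r0 := by
    rw [hmdef, hv]; field_simp
  -- Step C : deriv v r0 ≤ 0
  have hvd : HasDerivAt v
      ((deriv (deriv F) r0 * F r0 - deriv F r0 * deriv F r0) / (F r0)^2) r0 :=
    (hddF r0 hr0Ioo).div (hdF r0 hr0Ioo) (ne_of_gt hFr0)
  have hd0 : (deriv (deriv F) r0 * F r0 - deriv F r0 * deriv F r0) / (F r0)^2 ≤ 0 := by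
    have hslope : Filter.Tendsto (slope v r0) (𝓝[Set.Iio r0] r0)
        (𝓝 ((deriv (deriv F) r0 * F r0 - deriv F r0 * deriv F r0) / (F r0)^2)) := by
      rw [← hasDerivWithinAt_iff_tendsto_slope' (by simp : r0 ∉ Set.Iio r0)]
      exact hvd.hasDerivWithinAt
    refine le_of_tendsto hslope ?_
    have hev : ∀ᶠ t in 𝓝[Set.Iio r0] r0, t ∈ Set.Ioo ε r0 := by
      have : Set.Ioi ε ∈ 𝓝[Set.Iio r0] r0 :=
        mem_nhdsWithin_of_mem_nhds (Ioi_mem_nhds hr0ε)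
      filter_upwards [this, eventually_mem_nhdsWithin] with t h1 h2
      exact ⟨h1, h2⟩
    filter_upwards [hev] with t ht
    have hvt : v r0 ≤ v t := hr0min ⟨ht.1.le, le_trans ht.2.le hr0mem.2⟩
    have : t - r0 < 0 := by linarith [ht.2]
    rw [slope_def_field, div_nonpos_iff]
    left
    exact ⟨by linarith, by linarith⟩
  -- Step D : the comparison function G and its monotonicity
  have hsncont : Continuous (sn κ) := by
    rw [continuous_iff_continuousAt]; exact fun x => (sn_hasDerivAt κ x).continuousAt
  have hsnccont : Continuous (snc κ) := by
    rw [continuous_iff_continuousAt]; exact fun x => (snc_hasDerivAt κ x).continuousAt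
  have hsnne : ∀ x ∈ Set.Ioc (0:ℝ) R, sn κ x ≠ 0 := fun x hx => ne_of_gt (hsnpos x hx)
  set G : ℝ → ℝ := fun t => ν / sn κ t ^ 2 - ν * m * (snc κ t / sn κ t) - m ^ 2 - lam
    with hGdef
  have hhd : ∀ x ∈ Set.Ioo (0:ℝ) R,
      HasDerivAt (fun t => snc κ t / sn κ t) (-(1 / sn κ x ^ 2)) x := by
    intro x hx
    have hs : 0 < sn κ x := hsnpos x ⟨hx.1, hx.2.le⟩
    have h := (snc_hasDerivAt κ x).div (sn_hasDerivAt κ x) (ne_of_gt hs)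
    refine h.congr_deriv (Eq.symm ?_)
    have hpy := sn_pyth κ x
    field_simp
    linarith [hpy]
  have hantih : StrictAntiOn (fun t => snc κ t / sn κ t) (Set.Ioc 0 R) := by
    apply strictAntiOn_of_deriv_neg (convex_Ioc 0 R)
    · exact hsnccont.continuousOn.div hsncont.continuousOn hsnne
    · intro x hx
      rw [interior_Ioc] at hx
      rw [(hhd x hx).deriv]
      have hs : 0 < sn κ x := hsnpos x ⟨hx.1, hx.2.le⟩
      have : 0 < 1 / sn κ x ^ 2 := by positivity
      linarith
  have hsnR : 0 < sn κ R := hsnpos R ⟨hR, le_rfl⟩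
  have hαh : -α ≤ 2 * (snc κ R / sn κ R) := by
    rw [deriv_sn] at hα2
    have h : -2 * snc κ R / sn κ R = -(2 * (snc κ R / sn κ R)) := by ring
    linarith [hα2]
  have hm2h : ∀ x ∈ Set.Ioo (0:ℝ) R, m < 2 * (snc κ x / sn κ x) := by
    intro x hx
    have := hantih ⟨hx.1, hx.2.le⟩ ⟨hR, le_rfl⟩ hx.2
    linarith
  have hGd : ∀ x ∈ Set.Ioo (0:ℝ) R,
      HasDerivAt G (ν * (m - 2 * (snc κ x / sn κ x)) / sn κ x ^ 2) x := by
    intro x hx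
    have hs : 0 < sn κ x := hsnpos x ⟨hx.1, hx.2.le⟩
    have hs0 : sn κ x ≠ 0 := ne_of_gt hs
    have h1 : HasDerivAt (fun t => sn κ t ^ 2) (2 * sn κ x ^ 1 * snc κ x) x :=
      (sn_hasDerivAt κ x).pow 2
    have h2 := (hasDerivAt_const x ν).div h1 (by positivity : sn κ x ^ 2 ≠ 0)
    have h3 := (hhd x hx).const_mul (ν * m)
    have h4 := (h2.sub h3).sub_const (m ^ 2 + lam)
    have hGeq : G = fun t => (ν / sn κ t ^ 2 - ν * m * (snc κ t / sn κ t)) - (m^2 + lam) := by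
      funext t; rw [hGdef]; ring
    rw [hGeq]
    refine h4.congr_deriv (Eq.symm ?_)
    field_simp
    ring
  have hGanti : StrictAntiOn G (Set.Ioc 0 R) := by
    apply strictAntiOn_of_deriv_neg (convex_Ioc 0 R)
    · rw [hGdef]
      apply ContinuousOn.sub
      apply ContinuousOn.sub
      apply ContinuousOn.sub
      · exact continuousOn_const.div (hsncont.continuousOn.pow 2)
          (fun x hx => pow_ne_zero 2 (hsnne x hx))
      · exact continuousOn_const.mul
          (hsnccont.continuousOn.div hsncont.continuousOn hsnne)
      · exact continuousOn_const
      · exact continuousOn_const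
    · intro x hx
      rw [interior_Ioc] at hx
      rw [(hGd x hx).deriv]
      have hs : 0 < sn κ x := hsnpos x ⟨hx.1, hx.2.le⟩
      exact div_neg_of_neg_of_pos
        (mul_neg_of_pos_of_neg hνpos (by linarith [hm2h x hx])) (by positivity)
  -- Step C' : G r0 ≤ 0
  have hG0 : G r0 ≤ 0 := by
    have hodeR := hode r0 ⟨hr0Ioo.1, hr0Ioo.2.le⟩
    rw [deriv_sn] at hodeR
    have hs : 0 < sn κ r0 := hsnpos r0 ⟨hr0Ioo.1, hr0Ioo.2.le⟩
    have hs0 : sn κ r0 ≠ 0 := ne_of_gt hs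
    have hc : deriv (deriv F) r0
        = -(ν * (snc κ r0 / sn κ r0) * deriv F r0) - (lam - ν / sn κ r0 ^2) * F r0 := by
      linarith
    have heq : (deriv (deriv F) r0 * F r0 - deriv F r0 * deriv F r0) / F r0 ^ 2 = G r0 := by
      rw [hc, hbma, hGdef]
      field_simp
      ring
    linarith [hd0, heq.symm.trans_le hd0]
  -- Step E : the auxiliary function Φ and its derivative
  have hΦd : ∀ x ∈ Set.Ioo (0:ℝ) R, HasDerivAt
      (fun t => (deriv F t - m * F t) * (sn κ t ^ (p+1) * Real.exp (m*t)))
      (Real.exp (m*x) * sn κ x ^ p * (F x * (sn κ x * G x))) x := by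
    intro x hx
    have hs : 0 < sn κ x := hsnpos x ⟨hx.1, hx.2.le⟩
    have hs0 : sn κ x ≠ 0 := ne_of_gt hs
    have hodeX := hode x ⟨hx.1, hx.2.le⟩
    rw [deriv_sn] at hodeX
    have hc : deriv (deriv F) x
        = -(ν * (snc κ x / sn κ x) * deriv F x) - (lam - ν / sn κ x ^2) * F x := by
      linarith
    have h1 : HasDerivAt (fun t => sn κ t ^ (p+1)) (((p:ℝ)+1) * sn κ x ^ p * snc κ x) x := by
      have := (sn_hasDerivAt κ x).pow (p+1)
      exact this.congr_deriv (by simp)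
    have h2 : HasDerivAt (fun t => Real.exp (m*t)) (Real.exp (m*x) * m) x :=
      (hasDerivAt_cmul' m x).exp
    have h3 := ((hddF x hx).sub ((hdF x hx).const_mul m)).mul (h1.mul h2)
    refine h3.congr_deriv (Eq.symm ?_)
    simp only [hGdef]
    exact (phi_deriv_eq p ν m lam (F x) (deriv F x) (deriv (deriv F) x)
      (sn κ x) (snc κ x) (Real.exp (m*x)) hs0 hνdef hodeX).symm
  -- Step F : v < m strictly to the right of r0
  have key : ∀ t ∈ Set.Ioo r0 R, deriv F t / F t < m := by
    intro t ht
    have hsubt : Set.Icc r0 t ⊆ Set.Ioo 0 R := fun x hx =>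
      ⟨lt_of_lt_of_le hr0Ioo.1 hx.1, lt_of_le_of_lt hx.2 ht.2⟩
    have hanti2 : StrictAntiOn
        (fun t => (deriv F t - m * F t) * (sn κ t ^ (p+1) * Real.exp (m*t)))
        (Set.Icc r0 t) := by
      apply strictAntiOn_of_deriv_neg (convex_Icc r0 t)
      · intro x hx; exact (hΦd x (hsubt hx)).continuousAt.continuousWithinAt
      · intro x hx
        rw [interior_Icc] at hx
        have hxIoo : x ∈ Set.Ioo (0:ℝ) R := hsubt ⟨hx.1.le, hx.2.le⟩
        rw [(hΦd x hxIoo).deriv]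
        have hGx : G x < 0 := by
          have := hGanti ⟨hr0Ioo.1, hr0Ioo.2.le⟩ ⟨hxIoo.1, hxIoo.2.le⟩ hx.1
          linarith
        have hsx : 0 < sn κ x := hsnpos x ⟨hxIoo.1, hxIoo.2.le⟩
        have hFx : 0 < F x := hFpos x ⟨hxIoo.1, hxIoo.2.le⟩
        have h7 : F x * (sn κ x * G x) < 0 :=
          mul_neg_of_pos_of_neg hFx (mul_neg_of_pos_of_neg hsx hGx)
        have h8 : 0 < Real.exp (m*x) * sn κ x ^ p := by positivity
        exact mul_neg_of_pos_of_neg h8 h7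
    have hΦt := hanti2 ⟨le_rfl, ht.1.le⟩ ⟨ht.1.le, le_rfl⟩ ht.1
    have hΦr0 : (deriv F r0 - m * F r0) * (sn κ r0 ^ (p+1) * Real.exp (m*r0)) = 0 := by
      rw [hbma]; ring
    simp only [hΦr0] at hΦt
    have hst : 0 < sn κ t := hsnpos t ⟨lt_trans hr0Ioo.1 ht.1, ht.2.le⟩
    have hw : 0 < sn κ t ^ (p+1) * Real.exp (m*t) := by positivity
    have hFt : 0 < F t := hFpos t ⟨lt_trans hr0Ioo.1 ht.1, ht.2.le⟩
    have h9 : deriv F t - m * F t < 0 := by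
      by_contra h
      push_neg at h
      nlinarith [mul_nonneg h hw.le]
    rw [div_lt_iff₀ hFt]
    linarith
  -- Step G : contradiction via the limit at R
  have hNBR : (𝓝[Set.Ioo (0:ℝ) R] R).NeBot := by rw [hfilR]; infer_instance
  have hFtendR : Filter.Tendsto F (𝓝[Set.Ioo (0:ℝ) R] R) (𝓝 (F R)) :=
    (hcontF R ⟨hR.le, le_rfl⟩).mono Set.Ioo_subset_Icc_self
  have htv : Filter.Tendsto (fun t => deriv F t / F t) (𝓝[Set.Ioo (0:ℝ) R] R)
      (𝓝 (deriv F R / F R)) := htendR.div hFtendR (ne_of_gt hFR)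
  have hevR : ∀ᶠ t in 𝓝[Set.Ioo (0:ℝ) R] R, deriv F t / F t ≤ m := by
    have hIoi : Set.Ioi r0 ∈ 𝓝[Set.Ioo (0:ℝ) R] R :=
      mem_nhdsWithin_of_mem_nhds (Ioi_mem_nhds hr0R)
    filter_upwards [hIoi, eventually_mem_nhdsWithin] with t h1 h2
    exact (key t ⟨h1, h2.2⟩).le
  have hlast : deriv F R / F R ≤ m := le_of_tendsto htv hevR
  rw [hvR] at hlast
  linarith
end

section
/- Let κ ≤ 0, n ≥ 2, R > 0, λ ≥ 0, α ∈ ℝ with α < 0. Suppose F : (0,∞) → ℝ is positive, C¹, piecewise C², and satisfies: on (0,R], F'' + (n−1)(sn_κ'/sn_κ)F' + (λ − (n−1)/sn_κ²)F = 0 with F' ≥ −αF > 0; and on [R,∞), F(r) = F(R)e^{−α(r−R)}. Define H(r) = (F'(r))² + (n−1)F²(r)/sn_κ²(r) + 2α F(r)F'(r) + α(n−1)(sn_κ'(r)/sn_κ(r))F²(r). Then H is strictly monotonically decreasing on (0,∞). -/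
lemma sn_eq_zero : sn 0 = fun t => t := by
  funext t; simp [sn]

lemma sn_eq_neg {κ : ℝ} (hκ : κ < 0) :
    sn κ = fun t => Real.sinh (Real.sqrt (-κ) * t) / Real.sqrt (-κ) := by
  funext t; simp only [sn, if_neg (not_lt.2 hκ.le), if_neg hκ.ne]

lemma hasDerivAt_sn {κ : ℝ} (hκ : κ ≤ 0) (t : ℝ) :
    HasDerivAt (sn κ) (Real.cosh (Real.sqrt (-κ) * t)) t := by
  rcases eq_or_lt_of_le hκ with h | h
  · subst h
    rw [sn_eq_zero]
    exact (hasDerivAt_id' t).congr_deriv (by simp)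
  · have hc : 0 < Real.sqrt (-κ) := Real.sqrt_pos.2 (by linarith)
    rw [sn_eq_neg h]
    have h1 : HasDerivAt (fun t : ℝ => Real.sqrt (-κ) * t) (Real.sqrt (-κ)) t := by
      simpa using (hasDerivAt_id t).const_mul (Real.sqrt (-κ))
    have h2 := (h1.sinh).div_const (Real.sqrt (-κ))
    exact h2.congr_deriv (by field_simp)

lemma deriv_sn_s9 {κ : ℝ} (hκ : κ ≤ 0) :
    deriv (sn κ) = fun t => Real.cosh (Real.sqrt (-κ) * t) :=
  funext fun t => (hasDerivAt_sn hκ t).deriv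

lemma hasDerivAt_deriv_sn {κ : ℝ} (hκ : κ ≤ 0) (t : ℝ) :
    HasDerivAt (deriv (sn κ)) (-κ * sn κ t) t := by
  rw [deriv_sn_s9 hκ]
  have h1 : HasDerivAt (fun t : ℝ => Real.sqrt (-κ) * t) (Real.sqrt (-κ)) t := by
    simpa using (hasDerivAt_id t).const_mul (Real.sqrt (-κ))
  have h2 := h1.cosh
  convert h2 using 1
  rcases eq_or_lt_of_le hκ with h | h
  · subst h; simp
  · have hc : 0 < Real.sqrt (-κ) := Real.sqrt_pos.2 (by linarith)
    have hc2' : Real.sqrt (-κ) ^ 2 = -κ := Real.sq_sqrt (by linarith)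
    rw [sn_eq_neg h]
    field_simp
    ring_nf
    rw [hc2']
    ring

lemma sn_pos_s9 {κ : ℝ} (hκ : κ ≤ 0) {t : ℝ} (ht : 0 < t) : 0 < sn κ t := by
  rcases eq_or_lt_of_le hκ with h | h
  · subst h; rw [sn_eq_zero]; exact ht
  · have hc : 0 < Real.sqrt (-κ) := Real.sqrt_pos.2 (by linarith)
    rw [sn_eq_neg h]
    exact div_pos (by positivity) hc

lemma sn'_sq {κ : ℝ} (hκ : κ ≤ 0) (t : ℝ) :
    Real.cosh (Real.sqrt (-κ) * t) ^ 2 = 1 - κ * (sn κ t) ^ 2 := by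
  rcases eq_or_lt_of_le hκ with h | h
  · subst h; simp
  · have hc : 0 < Real.sqrt (-κ) := Real.sqrt_pos.2 (by linarith)
    have hc2' : Real.sqrt (-κ) ^ 2 = -κ := Real.sq_sqrt (by linarith)
    rw [sn_eq_neg h]
    have := Real.cosh_sq (Real.sqrt (-κ) * t)
    rw [this]
    field_simp
    ring_nf
    rw [hc2']
    ring

lemma continuous_sn {κ : ℝ} (hκ : κ ≤ 0) : Continuous (sn κ) := by
  rcases eq_or_lt_of_le hκ with h | h
  · subst h; rw [sn_eq_zero]; exact continuous_id
  · rw [sn_eq_neg h]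
    exact (Real.continuous_sinh.comp (continuous_const.mul continuous_id)).div_const _


set_option maxHeartbeats 4000000 in
/-- Proposition 4.1: the function H built from the (extended) radial eigenfunction F
is strictly monotonically decreasing on (0, ∞). -/
theorem H_strictAnti (κ : ℝ) (hκ : κ ≤ 0) (n : ℕ) (hn : 2 ≤ n) (R : ℝ) (hR : 0 < R)
    (lam : ℝ) (hlam : 0 ≤ lam) (α : ℝ) (hα : α < 0) (F H : ℝ → ℝ)
    (hFpos : ∀ r > (0 : ℝ), 0 < F r)
    (hF1 : ContDiffOn ℝ 1 F (Set.Ioi 0))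
    (hF2 : ContDiffOn ℝ 2 F (Set.Ioc 0 R))
    (hode : ∀ r ∈ Set.Ioc (0 : ℝ) R,
      deriv (deriv F) r + ((n : ℝ) - 1) * (deriv (sn κ) r / sn κ r) * deriv F r
        + (lam - ((n : ℝ) - 1) / (sn κ r) ^ 2) * F r = 0)
    (hgr : ∀ r ∈ Set.Ioc (0 : ℝ) R, -α * F r ≤ deriv F r)
    (hext : ∀ r ≥ R, F r = F R * Real.exp (-α * (r - R)))
    (hH : ∀ r, H r = (deriv F r) ^ 2 + ((n : ℝ) - 1) * (F r) ^ 2 / (sn κ r) ^ 2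
        + 2 * α * F r * deriv F r
        + α * ((n : ℝ) - 1) * (deriv (sn κ) r / sn κ r) * (F r) ^ 2) :
    StrictAntiOn H (Set.Ioi 0) := by
  have hn1 : (1:ℝ) ≤ (n:ℝ) - 1 := by
    have : (2:ℝ) ≤ (n:ℝ) := by exact_mod_cast hn
    linarith
  have hHG : H = fun r => (deriv F r) ^ 2 + ((n : ℝ) - 1) * (F r) ^ 2 / (sn κ r) ^ 2
        + 2 * α * F r * deriv F r
        + α * ((n : ℝ) - 1) * (deriv (sn κ) r / sn κ r) * (F r) ^ 2 := funext hH
  -- continuity of H on Ioi 0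
  have hFc : ContinuousOn F (Set.Ioi 0) := hF1.continuousOn
  have hF'c : ContinuousOn (deriv F) (Set.Ioi 0) :=
    hF1.continuousOn_deriv_of_isOpen isOpen_Ioi le_rfl
  have hsnc : Continuous (sn κ) := continuous_sn hκ
  have hsn'c : Continuous (deriv (sn κ)) := by
    rw [deriv_sn_s9 hκ]
    exact Real.continuous_cosh.comp (continuous_const.mul continuous_id)
  have hsne : ∀ x ∈ Set.Ioi (0:ℝ), sn κ x ≠ 0 := fun x hx => (sn_pos_s9 hκ hx).ne'
  have hHcont : ContinuousOn H (Set.Ioi 0) := by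
    rw [hHG]
    exact (((hF'c.pow 2).add
        ((continuousOn_const.mul (hFc.pow 2)).div ((hsnc.continuousOn).pow 2)
          (fun x hx => pow_ne_zero 2 (hsne x hx)))).add
        ((continuousOn_const.mul hFc).mul hF'c)).add
        ((continuousOn_const.mul ((hsn'c.continuousOn).div hsnc.continuousOn hsne)).mul
          (hFc.pow 2))
  -- derivative is negative on (0, R)
  have key1 : ∀ r ∈ Set.Ioo (0:ℝ) R, deriv H r < 0 := by
    intro r hr
    obtain ⟨hr0, hrR⟩ := hr
    have hF'at : HasDerivAt F (deriv F r) r :=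
      ((hF1.differentiableOn one_ne_zero).differentiableAt (isOpen_Ioi.mem_nhds hr0)).hasDerivAt
    have hdF : ContDiffOn ℝ 1 (deriv F) (Set.Ioo 0 R) :=
      (hF2.mono Set.Ioo_subset_Ioc_self).deriv_of_isOpen isOpen_Ioo (by norm_num)
    have hF''at : HasDerivAt (deriv F) (deriv (deriv F) r) r :=
      ((hdF.differentiableOn one_ne_zero).differentiableAt
        (isOpen_Ioo.mem_nhds ⟨hr0, hrR⟩)).hasDerivAt
    have hs : HasDerivAt (sn κ) (Real.cosh (Real.sqrt (-κ) * r)) r := hasDerivAt_sn hκ r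
    have hs' : HasDerivAt (deriv (sn κ)) (-κ * sn κ r) r := hasDerivAt_deriv_sn hκ r
    have hsp : 0 < sn κ r := sn_pos_s9 hκ hr0
    have hsne2 : (sn κ r)^2 ≠ 0 := pow_ne_zero 2 hsp.ne'
    have hODE := hode r ⟨hr0, hrR.le⟩
    simp only [deriv_sn_s9 hκ] at hODE
    have ha''eq : deriv (deriv F) r
        = -(((n:ℝ)-1)*((Real.cosh (Real.sqrt (-κ) * r))/(sn κ r))*(deriv F r)) - (lam - ((n:ℝ)-1)/(sn κ r)^2)*(F r) := by linarith
    have hp2 : (Real.cosh (Real.sqrt (-κ) * r))^2 = 1 - κ * (sn κ r)^2 := sn'_sq hκ r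
    have hκe : -κ * sn κ r = ((Real.cosh (Real.sqrt (-κ) * r))^2 - 1)/(sn κ r) := by
      field_simp
      linarith [hp2]
    have hgr' := hgr r ⟨hr0, hrR.le⟩
    have hap : 0 < F r := hFpos r hr0
    have hD2 : HasDerivAt H ((-2*((n:ℝ)-1)*(Real.cosh (Real.sqrt (-κ) * r))*(sn κ r)^3*(deriv F r)^2 + 4*((n:ℝ)-1)*(sn κ r)^2*(F r)*(deriv F r) - 2*((n:ℝ)-1)*(Real.cosh (Real.sqrt (-κ) * r))*(sn κ r)*(F r)^2 - 2*lam*(sn κ r)^4*(F r)*(deriv F r) - 2*α*lam*(sn κ r)^4*(F r)^2 + 2*α*(sn κ r)^4*(deriv F r)^2 + α*((n:ℝ)-1)*(sn κ r)^2*(F r)^2) / (sn κ r)^4) r := by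
      rw [hHG]
      have hD0 := (((hF''at.pow 2).add
          (((hF'at.pow 2).const_mul ((n:ℝ)-1)).div (hs.pow 2) hsne2)).add
          ((hF'at.const_mul (2*α)).mul hF''at)).add
          (((hs'.div hs hsp.ne').const_mul (α*((n:ℝ)-1))).mul (hF'at.pow 2))
      refine hD0.congr_deriv ?_
      simp only [deriv_sn_s9 hκ]
      rw [ha''eq, hκe]
      simp only [Pi.pow_apply, Pi.div_apply]
      field_simp
      ring
    rw [hD2.deriv]
    apply div_neg_of_neg_of_pos _ (pow_pos hsp 4)
    have ha'pos : 0 < deriv F r := lt_of_lt_of_le (by nlinarith) hgr'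
    have hp1 : 1 ≤ Real.cosh (Real.sqrt (-κ) * r) := Real.one_le_cosh _
    have hp0 : (0:ℝ) ≤ (Real.cosh (Real.sqrt (-κ) * r)) - 1 := by linarith
    have t1 : 0 ≤ ((n:ℝ)-1) * (sn κ r) * (((Real.cosh (Real.sqrt (-κ) * r))-1) * ((sn κ r)*(deriv F r))^2) :=
      mul_nonneg (mul_nonneg (by linarith) hsp.le) (mul_nonneg hp0 (sq_nonneg _))
    have t2 : 0 ≤ ((n:ℝ)-1) * (sn κ r) * ((sn κ r)*(deriv F r) - (F r))^2 :=
      mul_nonneg (mul_nonneg (by linarith) hsp.le) (sq_nonneg _)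
    have t3 : 0 ≤ ((n:ℝ)-1) * (sn κ r) * (((Real.cosh (Real.sqrt (-κ) * r))-1) * (F r)^2) :=
      mul_nonneg (mul_nonneg (by linarith) hsp.le) (mul_nonneg hp0 (sq_nonneg _))
    have t4 : 0 ≤ lam * (sn κ r)^4 * ((F r) * ((deriv F r) + α*(F r))) :=
      mul_nonneg (mul_nonneg hlam (pow_pos hsp 4).le)
        (mul_nonneg hap.le (by linarith))
    have t5 : α * ((sn κ r)^4 * (deriv F r)^2) < 0 :=
      mul_neg_of_neg_of_pos hα (mul_pos (pow_pos hsp 4) (pow_pos ha'pos 2))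
    have t6 : α * (((n:ℝ)-1) * ((sn κ r)^2 * (F r)^2)) < 0 :=
      mul_neg_of_neg_of_pos hα
        (mul_pos (by linarith) (mul_pos (pow_pos hsp 2) (pow_pos hap 2)))
    nlinarith [t1, t2, t3, t4, t5, t6]
  have key2 : ∀ r ∈ Set.Ioi R, deriv H r < 0 := by
    have hF'A : ∀ x ∈ Set.Ioi R, HasDerivAt F (-α * F x) x := by
      intro x hx
      have hgd : HasDerivAt (fun y => F R * Real.exp (-α * (y - R)))
          (F R * (Real.exp (-α * (x - R)) * (-α * 1))) x :=
        ((((hasDerivAt_id x).sub_const R).const_mul (-α)).exp).const_mul (F R)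
      have hFg : F =ᶠ[nhds x] fun y => F R * Real.exp (-α * (y - R)) := by
        filter_upwards [Ioi_mem_nhds hx] with y hy using hext y (le_of_lt hy)
      have h0 := hgd.congr_of_eventuallyEq hFg
      refine h0.congr_deriv ?_
      rw [hext x (le_of_lt hx)]
      ring
    intro r hr
    have hrR : R < r := hr
    have hr0 : 0 < r := hR.trans hrR
    have hF'd : deriv F r = -α * F r := (hF'A r hr).deriv
    have hF'at : HasDerivAt F (deriv F r) r := by rw [hF'd]; exact hF'A r hr
    have heq : deriv F =ᶠ[nhds r] fun x => -α * F x := by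
      filter_upwards [Ioi_mem_nhds hr] with x hx using (hF'A x hx).deriv
    have h2 : HasDerivAt (fun x => -α * F x) (-α * (-α * F r)) r :=
      (hF'A r hr).const_mul (-α)
    have h3 := h2.congr_of_eventuallyEq heq
    have hd2d : deriv (deriv F) r = α^2 * F r := by rw [h3.deriv]; ring
    have hF''at : HasDerivAt (deriv F) (deriv (deriv F) r) r := by
      rw [hd2d]
      refine h3.congr_deriv ?_
      ring
    have hs : HasDerivAt (sn κ) (Real.cosh (Real.sqrt (-κ) * r)) r := hasDerivAt_sn hκ r
    have hs' : HasDerivAt (deriv (sn κ)) (-κ * sn κ r) r := hasDerivAt_deriv_sn hκ r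
    have hsp : 0 < sn κ r := sn_pos_s9 hκ hr0
    have hsne2 : (sn κ r)^2 ≠ 0 := pow_ne_zero 2 hsp.ne'
    have hap : 0 < F r := hFpos r hr0
    have hp1 : 1 ≤ Real.cosh (Real.sqrt (-κ) * r) := Real.one_le_cosh _
    have hp2 : (Real.cosh (Real.sqrt (-κ) * r))^2 = 1 - κ * (sn κ r)^2 := sn'_sq hκ r
    have hκe : -κ * sn κ r = ((Real.cosh (Real.sqrt (-κ) * r))^2 - 1)/(sn κ r) := by
      field_simp
      linarith [hp2]
    have hD2 : HasDerivAt H ((2*α^3*(F r)^2*(sn κ r)^4 - 3*α*((n:ℝ)-1)*(F r)^2*(sn κ r)^2 - 2*((n:ℝ)-1)*(Real.cosh (Real.sqrt (-κ) * r))*(F r)^2*(sn κ r) - 2*α^2*((n:ℝ)-1)*(Real.cosh (Real.sqrt (-κ) * r))*(F r)^2*(sn κ r)^3) / (sn κ r)^4) r := by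
      rw [hHG]
      have hD0 := (((hF''at.pow 2).add
          (((hF'at.pow 2).const_mul ((n:ℝ)-1)).div (hs.pow 2) hsne2)).add
          ((hF'at.const_mul (2*α)).mul hF''at)).add
          (((hs'.div hs hsp.ne').const_mul (α*((n:ℝ)-1))).mul (hF'at.pow 2))
      refine hD0.congr_deriv ?_
      simp only [deriv_sn_s9 hκ]
      rw [hd2d, hκe, hF'd]
      simp only [Pi.pow_apply, Pi.div_apply]
      field_simp
      ring
    rw [hD2.deriv]
    apply div_neg_of_neg_of_pos _ (pow_pos hsp 4)
    have hα2 : 0 < α^2 := by have := mul_pos_of_neg_of_neg hα hα; nlinarith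
    have hAux : (0:ℝ) < 2 + 3*α*(sn κ r) + 2*α^2*(sn κ r)^2 := by nlinarith [sq_nonneg (4*α*(sn κ r)+3)]
    have hX : (0:ℝ) < 3*α*(sn κ r) + 2*(Real.cosh (Real.sqrt (-κ) * r)) + 2*α^2*(Real.cosh (Real.sqrt (-κ) * r))*(sn κ r)^2 := by
      nlinarith [mul_nonneg (by linarith : (0:ℝ) ≤ (Real.cosh (Real.sqrt (-κ) * r)) - 1)
        (by positivity : (0:ℝ) ≤ 2 + 2*α^2*(sn κ r)^2)]
    have h1 : 0 < ((n:ℝ)-1) * (F r)^2 * (sn κ r) * (3*α*(sn κ r) + 2*(Real.cosh (Real.sqrt (-κ) * r)) + 2*α^2*(Real.cosh (Real.sqrt (-κ) * r))*(sn κ r)^2) :=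
      mul_pos (mul_pos (mul_pos (by linarith) (pow_pos hap 2)) hsp) hX
    have h2' : α^3 * ((F r)^2 * (sn κ r)^4) < 0 :=
      mul_neg_of_neg_of_pos (by nlinarith) (mul_pos (pow_pos hap 2) (pow_pos hsp 4))
    nlinarith [h1, h2']
  -- assemble
  have A1 : StrictAntiOn H (Set.Ioc 0 R) :=
    strictAntiOn_of_deriv_neg (convex_Ioc 0 R) (hHcont.mono (fun x hx => hx.1))
      (by intro x hx; rw [interior_Ioc] at hx; exact key1 x hx)
  have A2 : StrictAntiOn H (Set.Ici R) :=
    strictAntiOn_of_deriv_neg (convex_Ici R)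
      (hHcont.mono (fun x hx => lt_of_lt_of_le hR hx))
      (by intro x hx; rw [interior_Ici] at hx; exact key2 x hx)
  intro x hx y hy hxy
  rcases le_or_gt y R with h | h
  · exact A1 ⟨hx, le_trans hxy.le h⟩ ⟨hy, h⟩ hxy
  · rcases le_or_gt R x with h' | h'
    · exact A2 h' (le_of_lt (lt_of_le_of_lt h' hxy)) hxy
    · exact lt_trans (A2 Set.self_mem_Ici h.le h) (A1 ⟨hx, h'.le⟩ ⟨hR, le_refl R⟩ h')
end

section
/- Let κ ≤ 0, n ≥ 2, λ ≥ 0, α ∈ ℝ, and let F be C² on an interval I ⊂ (0,∞) with F > 0, F' > 0 there, satisfying F'' + (n−1)(sn_κ'/sn_κ)F' + (λ − (n−1)/sn_κ²)F = 0. Then the quantity I(r) := 2F'F'' − 2(n−1)(sn_κ'/sn_κ³)F² + (2(n−1)/sn_κ²)FF' satisfies I(r) = −(2(n−1)/sn_κ³)(sn_κ² sn_κ'(F')² − 2 sn_κ FF' + sn_κ' F²) − 2λFF' ≤ −2λFF' on I. -/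
lemma sn_pos_of_nonpos {κ r : ℝ} (hκ : κ ≤ 0) (hr : 0 < r) : 0 < sn κ r := by
  unfold sn
  rcases eq_or_lt_of_le hκ with h | h
  · simp [h, hr.le, not_lt.mpr hκ, hr]
  · rw [if_neg (by linarith), if_neg (by linarith)]
    have hc : 0 < Real.sqrt (-κ) := Real.sqrt_pos.mpr (by linarith)
    exact div_pos (Real.sinh_pos_iff.mpr (by positivity)) hc

lemma deriv_sn_ge_one {κ : ℝ} (hκ : κ ≤ 0) (r : ℝ) : 1 ≤ deriv (sn κ) r := by
  rcases eq_or_lt_of_le hκ with h | h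
  · subst h
    have : sn 0 = fun t => t := by
      funext t; unfold sn
      rw [if_neg (lt_irrefl 0), if_pos rfl]
    rw [this]; simp
  · have hc : 0 < Real.sqrt (-κ) := Real.sqrt_pos.mpr (by linarith)
    have hsn : sn κ = fun t => Real.sinh (Real.sqrt (-κ) * t) / Real.sqrt (-κ) := by
      funext t; unfold sn; rw [if_neg (by linarith), if_neg (by linarith)]
    have hd : HasDerivAt (sn κ) (Real.cosh (Real.sqrt (-κ) * r)) r := by
      rw [hsn]
      have h1 : HasDerivAt (fun t => Real.sinh (Real.sqrt (-κ) * t))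
          (Real.cosh (Real.sqrt (-κ) * r) * Real.sqrt (-κ)) r := by
        have hd2 : HasDerivAt (fun t : ℝ => Real.sqrt (-κ) * t) (Real.sqrt (-κ)) r := by
          simpa using (hasDerivAt_id r).const_mul (Real.sqrt (-κ))
        have := (Real.hasDerivAt_sinh (Real.sqrt (-κ) * r)).comp r hd2
        exact this
      have h2 := h1.div_const (Real.sqrt (-κ))
      rwa [mul_div_assoc, div_self hc.ne', mul_one] at h2
    rw [hd.deriv]
    exact Real.one_le_cosh _

/-- The identity and estimate for the quantity I(r) appearing in the proof
that H is decreasing on (0, R]. -/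
theorem I_identity_and_bound (κ : ℝ) (hκ : κ ≤ 0) (n : ℕ) (hn : 2 ≤ n)
    (lam α : ℝ) (hlam : 0 ≤ lam)
    (s : Set ℝ) (hs : s ⊆ Set.Ioi 0) (F : ℝ → ℝ) (hF : ContDiffOn ℝ 2 F s)
    (hFpos : ∀ r ∈ s, 0 < F r) (hF' : ∀ r ∈ s, 0 < deriv F r)
    (hode : ∀ r ∈ s,
      deriv (deriv F) r + ((n : ℝ) - 1) * (deriv (sn κ) r / sn κ r) * deriv F r
        + (lam - ((n : ℝ) - 1) / (sn κ r) ^ 2) * F r = 0) :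
    ∀ r ∈ s,
      (2 * deriv F r * deriv (deriv F) r
          - 2 * ((n : ℝ) - 1) * (deriv (sn κ) r / (sn κ r) ^ 3) * (F r) ^ 2
          + (2 * ((n : ℝ) - 1) / (sn κ r) ^ 2) * F r * deriv F r
        = -(2 * ((n : ℝ) - 1) / (sn κ r) ^ 3) *
            ((sn κ r) ^ 2 * deriv (sn κ) r * (deriv F r) ^ 2
              - 2 * sn κ r * F r * deriv F r + deriv (sn κ) r * (F r) ^ 2)
          - 2 * lam * F r * deriv F r) ∧
      (2 * deriv F r * deriv (deriv F) r
          - 2 * ((n : ℝ) - 1) * (deriv (sn κ) r / (sn κ r) ^ 3) * (F r) ^ 2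
          + (2 * ((n : ℝ) - 1) / (sn κ r) ^ 2) * F r * deriv F r
        ≤ -2 * lam * F r * deriv F r) := by
  intro r hr
  have hrpos : 0 < r := hs hr
  have hS : 0 < sn κ r := sn_pos_of_nonpos hκ hrpos
  have hS' : 1 ≤ deriv (sn κ) r := deriv_sn_ge_one hκ r
  have hode' := hode r hr
  set S := sn κ r
  set S' := deriv (sn κ) r
  set f := F r
  set f' := deriv F r
  set f'' := deriv (deriv F) r
  have hn' : (1:ℝ) ≤ (n:ℝ) - 1 := by
    have : (2:ℝ) ≤ n := by exact_mod_cast hn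
    linarith
  have hf'' : f'' = -(((n:ℝ) - 1) * (S' / S) * f' + (lam - ((n:ℝ) - 1) / S ^ 2) * f) := by
    linarith
  constructor
  · rw [hf'']; field_simp; ring
  · rw [hf'']
    have hfpos := hFpos r hr
    have hf'pos := hF' r hr
    have key : 0 ≤ S ^ 2 * S' * f' ^ 2 - 2 * S * f * f' + S' * f ^ 2 := by
      nlinarith [sq_nonneg (S * f' - f), sq_nonneg f, sq_nonneg (S * f')]
    have h1 : -(2 * ((n:ℝ) - 1) / S ^ 3) *
        (S ^ 2 * S' * f' ^ 2 - 2 * S * f * f' + S' * f ^ 2) ≤ 0 := by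
      apply mul_nonpos_of_nonpos_of_nonneg _ key
      have : 0 < 2 * ((n:ℝ) - 1) / S ^ 3 := by positivity
      linarith
    calc 2 * f' * (-(((n:ℝ) - 1) * (S' / S) * f' + (lam - ((n:ℝ) - 1) / S ^ 2) * f))
          - 2 * ((n:ℝ) - 1) * (S' / S ^ 3) * f ^ 2
          + (2 * ((n:ℝ) - 1) / S ^ 2) * f * f'
        = -(2 * ((n:ℝ) - 1) / S ^ 3) *
            (S ^ 2 * S' * f' ^ 2 - 2 * S * f * f' + S' * f ^ 2)
          - 2 * lam * f * f' := by field_simp; ring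
      _ ≤ -2 * lam * f * f' := by linarith
end

section
/- Let K be a nonempty compact convex subset of ℝⁿ homeomorphic to a closed ball, let μ be a finite positive measure supported in K, let F : [0,∞) → [0,∞) be continuous with F(0) = 0 and F > 0 on (0,∞), and let u : K → (0,∞) be continuous. Then there exists a point p ∈ K such that ∫_K F(|x − p|) (x − p)/|x − p| · u(x) dμ(x) = 0 (with the integrand defined to be 0 where x = p). -/
open MeasureTheory Metric Set Filter intervalIntegral
open scoped RealInnerProductSpace Topology

variable {E : Type*} [NormedAddCommGroup E] [InnerProductSpace ℝ E]

/-- derivative of the norm away from 0 -/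
lemma hasFDerivAt_norm_aux {v : E} (hv : v ≠ 0) :
    HasFDerivAt (fun w : E => ‖w‖) (‖v‖⁻¹ • innerSL ℝ v) v := by
  have h1 : HasFDerivAt (fun w : E => ‖w‖ ^ 2) (2 • innerSL ℝ v) v :=
    (hasStrictFDerivAt_norm_sq v).hasFDerivAt
  have h0 : (‖v‖ : ℝ) ^ 2 ≠ 0 := pow_ne_zero _ (norm_ne_zero_iff.mpr hv)
  have h2 : HasDerivAt Real.sqrt (1 / (2 * Real.sqrt (‖v‖ ^ 2))) (‖v‖ ^ 2) :=
    Real.hasDerivAt_sqrt h0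
  have h3 := h2.comp_hasFDerivAt v h1
  have hs : (Real.sqrt ∘ fun w : E => ‖w‖ ^ 2) = fun w : E => ‖w‖ := by
    funext w; simp [Function.comp, Real.sqrt_sq (norm_nonneg w)]
  rw [hs] at h3
  refine h3.congr_fderiv ?_
  rw [Real.sqrt_sq (norm_nonneg v)]
  ext w
  have hvn : ‖v‖ ≠ 0 := norm_ne_zero_iff.mpr hv
  simp only [ContinuousLinearMap.coe_smul', Pi.smul_apply, smul_eq_mul,
    ContinuousLinearMap.smul_apply, two_smul, ← two_mul, ContinuousLinearMap.add_apply]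
  field_simp

/-- derivative of `q ↦ G ‖x - q‖` where `G t = ∫_0^t F`. -/
lemma hasFDerivAt_G_norm {F : ℝ → ℝ} (hFc : Continuous F) (hF0 : F 0 = 0) (x p : E) :
    HasFDerivAt (fun q : E => ∫ s in (0:ℝ)..(‖x - q‖), F s)
      (innerSL ℝ (-((F ‖x - p‖ / ‖x - p‖) • (x - p)))) p := by
  by_cases hxp : x = p
  · -- at the singularity: derivative is 0
    subst hxp
    have hzero : innerSL ℝ (-((F ‖x - x‖ / ‖x - x‖) • (x - x))) = 0 := by
      simp
    rw [hzero]
    rw [hasFDerivAt_iff_isLittleO_nhds_zero]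
    rw [Asymptotics.isLittleO_iff]
    intro ε hε
    have hc := hFc.continuousAt (x := 0)
    rw [Metric.continuousAt_iff] at hc
    obtain ⟨δ, hδ, hδ'⟩ := hc ε hε
    filter_upwards [Metric.ball_mem_nhds (0 : E) hδ] with h hh
    have h1 : x - (x + h) = -h := by abel
    have h2 : x - x = (0 : E) := sub_self x
    simp only [h1, h2, norm_neg, norm_zero, intervalIntegral.integral_same,
      ContinuousLinearMap.zero_apply, sub_zero]
    have hb : ∀ s ∈ Set.uIoc (0:ℝ) ‖h‖, ‖F s‖ ≤ ε := by
      intro s hs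
      rw [Set.uIoc_of_le (norm_nonneg h)] at hs
      have hh' : ‖h‖ < δ := by simpa using mem_ball_iff_norm.mp hh
      have : dist s 0 < δ := by
        rw [Real.dist_eq, sub_zero, abs_of_pos hs.1]
        exact lt_of_le_of_lt hs.2 hh'
      have := hδ' this
      rw [hF0, dist_zero_right] at this
      exact this.le
    have := intervalIntegral.norm_integral_le_of_norm_le_const hb
    simpa [abs_of_nonneg (norm_nonneg h)] using this
  · -- away from the singularity: chain rule
    have hvp : x - p ≠ 0 := sub_ne_zero.mpr hxp
    have hsub : HasFDerivAt (fun q : E => x - q) (-(ContinuousLinearMap.id ℝ E)) p := by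
      have h0 : HasFDerivAt (fun q : E => x - q)
          ((0 : E →L[ℝ] E) - ContinuousLinearMap.id ℝ E) p :=
        (hasFDerivAt_const x p).sub (hasFDerivAt_id p)
      rwa [zero_sub] at h0
    have hnorm := (hasFDerivAt_norm_aux hvp).comp p hsub
    have hG : HasDerivAt (fun t => ∫ s in (0:ℝ)..t, F s) (F ‖x - p‖) ‖x - p‖ :=
      intervalIntegral.integral_hasDerivAt_right (hFc.intervalIntegrable _ _)
        (hFc.stronglyMeasurableAtFilter _ _) hFc.continuousAt
    have hcomp := hG.comp_hasFDerivAt p hnorm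
    refine hcomp.congr_fderiv ?_
    ext w
    have hvn : ‖x - p‖ ≠ 0 := norm_ne_zero_iff.mpr hvp
    simp only [innerSL_apply_apply, inner_neg_left, real_inner_smul_left,
      ContinuousLinearMap.coe_smul', Pi.smul_apply, ContinuousLinearMap.coe_comp',
      Function.comp_apply, ContinuousLinearMap.neg_apply, ContinuousLinearMap.coe_id',
      id_eq, smul_eq_mul, inner_neg_right]
    rw [div_eq_mul_inv]
    ring

/-- continuous functions are integrable w.r.t. a finite measure supported on a compact set -/
lemma integrable_of_cont_aux {α : Type*} [MeasurableSpace α] [TopologicalSpace α]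
    [OpensMeasurableSpace α] [SecondCountableTopology α] {H : Type*} [NormedAddCommGroup H]
    {K : Set α} (hK : IsCompact K) (μ : Measure α) [IsFiniteMeasure μ] (hμK : μ Kᶜ = 0)
    {g : α → H} (hg : Continuous g) : Integrable g μ := by
  have haeK : ∀ᵐ x ∂μ, x ∈ K := by
    rw [ae_iff]
    simpa [Set.compl_def] using hμK
  rcases K.eq_empty_or_nonempty with hKe | hKne
  · refine ⟨hg.aestronglyMeasurable, ?_⟩
    have : μ Set.univ = 0 := by simpa [hKe] using hμK
    have hμ0 : μ = 0 := by
      ext s hs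
      exact le_antisymm (le_trans (measure_mono (Set.subset_univ s)) this.le) zero_le
    simp [hμ0]
  · obtain ⟨z, hz, hmax⟩ := hK.exists_isMaxOn hKne (hg.norm.continuousOn)
    refine Integrable.mono' (integrable_const ‖g z‖) hg.aestronglyMeasurable ?_
    filter_upwards [haeK] with x hx
    exact hmax hx

/-- Norm bound for the vector field integrand. -/
lemma normV_le_aux (F : ℝ → ℝ) (c : ℝ) (v : E) :
    ‖(F ‖v‖ / ‖v‖ * c) • v‖ ≤ |F ‖v‖| * |c| := by
  by_cases hv : v = 0
  · simp [hv]
    positivity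
  · have hn : ‖v‖ ≠ 0 := norm_ne_zero_iff.mpr hv
    rw [norm_smul, Real.norm_eq_abs, abs_mul, abs_div, abs_norm]
    rw [mul_comm (|F ‖v‖| / ‖v‖) |c|, mul_assoc, div_mul_cancel₀ _ hn]
    rw [mul_comm]

/-- Continuity of the vector field integrand in `x`. -/
lemma continuous_V_aux {F : ℝ → ℝ} (hFc : Continuous F) (hF0 : F 0 = 0)
    {u : E → ℝ} (hu : Continuous u) (p : E) :
    Continuous (fun x : E => (F ‖x - p‖ / ‖x - p‖ * u x) • (x - p)) := by
  rw [continuous_iff_continuousAt]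
  intro x
  by_cases hxp : x = p
  · subst hxp
    have hval : (F ‖x - x‖ / ‖x - x‖ * u x) • (x - x) = 0 := by simp
    rw [ContinuousAt, hval]
    refine squeeze_zero_norm (a := fun y : E => |F ‖y - x‖| * |u y|)
      (fun y => normV_le_aux F (u y) (y - x)) ?_
    have hgc : Continuous (fun y : E => |F ‖y - x‖| * |u y|) :=
      ((hFc.comp ((continuous_id.sub continuous_const).norm)).abs).mul hu.abs
    have := hgc.continuousAt (x := x)
    rw [ContinuousAt] at this
    simpa [hF0] using this
  · have hn : ‖x - p‖ ≠ 0 := norm_ne_zero_iff.mpr (sub_ne_zero.mpr hxp)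
    have h1 : ContinuousAt (fun y : E => ‖y - p‖) x :=
      ((continuous_id.sub continuous_const).norm).continuousAt
    exact (((hFc.continuousAt.comp h1).div h1 hn).mul hu.continuousAt).smul
      (continuous_id.sub continuous_const).continuousAt

/-- One-sided first derivative test. -/
lemma deriv_nonneg_of_min_aux {h : ℝ → ℝ} {a : ℝ} (hd : HasDerivAt h a 0)
    (hmin : ∀ t ∈ Set.Ioo (0:ℝ) 1, h 0 ≤ h t) : 0 ≤ a := by
  have h1 := (hd.hasDerivWithinAt (s := Set.Ioi (0:ℝ)))
  rw [hasDerivWithinAt_iff_tendsto_slope] at h1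
  rw [Set.diff_singleton_eq_self (by simp)] at h1
  have hev : ∀ᶠ t in 𝓝[>] (0:ℝ), 0 ≤ slope h 0 t := by
    filter_upwards [Ioo_mem_nhdsGT_of_mem ⟨le_refl (0:ℝ), one_pos⟩] with t ht
    rw [slope_def_field]
    have := hmin t ht
    exact div_nonneg (by linarith) (by linarith [ht.1])
  exact ge_of_tendsto h1 hev

/-- Center-of-mass lemma (Euclidean case): there is a point p in the compact convex
set K at which the weighted moment vector field vanishes. -/
theorem center_of_mass_exists (n : ℕ) (hn : 1 ≤ n)
    (K : Set (EuclideanSpace ℝ (Fin n)))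
    (hKcpt : IsCompact K) (hKconv : Convex ℝ K) (hKne : K.Nonempty)
    (hKball : Nonempty (K ≃ₜ Metric.closedBall (0 : EuclideanSpace ℝ (Fin n)) 1))
    (μ : Measure (EuclideanSpace ℝ (Fin n))) [IsFiniteMeasure μ] (hμK : μ Kᶜ = 0)
    (hμpos : μ ≠ 0)
    (F : ℝ → ℝ) (hFc : Continuous F) (hF0 : F 0 = 0)
    (hFpos : ∀ t > (0 : ℝ), 0 < F t) (hFnn : ∀ t ≥ (0 : ℝ), 0 ≤ F t)
    (u : EuclideanSpace ℝ (Fin n) → ℝ) (hu : Continuous u)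
    (hupos : ∀ x ∈ K, 0 < u x) :
    ∃ p ∈ K, ∫ x, (F ‖x - p‖ / ‖x - p‖ * u x) • (x - p) ∂μ = 0 := by
  classical
  set V : (EuclideanSpace ℝ (Fin n)) → (EuclideanSpace ℝ (Fin n)) → (EuclideanSpace ℝ (Fin n)) := fun p x => (F ‖x - p‖ / ‖x - p‖ * u x) • (x - p) with hV
  have haeK : ∀ᵐ x ∂μ, x ∈ K := by
    rw [ae_iff]
    simpa [Set.compl_def] using hμK
  have hVcont : ∀ p, Continuous (V p) := fun p => continuous_V_aux hFc hF0 hu p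
  have hVint : ∀ p, Integrable (V p) μ := fun p => integrable_of_cont_aux hKcpt μ hμK (hVcont p)
  have hLcont : ∀ p, Continuous (fun x => innerSL ℝ (-(V p x))) := fun p =>
    (innerSL ℝ).continuous.comp (hVcont p).neg
  have hLint : ∀ p, Integrable (fun x => innerSL ℝ (-(V p x))) μ := fun p =>
    integrable_of_cont_aux hKcpt μ hμK (hLcont p)
  have hGc : Continuous (fun t => ∫ s in (0:ℝ)..t, F s) := by
    rw [continuous_iff_continuousAt]
    intro t
    exact (intervalIntegral.integral_hasDerivAt_right (hFc.intervalIntegrable _ _)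
      (hFc.stronglyMeasurableAtFilter _ _) hFc.continuousAt).continuousAt
  have hΦc : ∀ p : (EuclideanSpace ℝ (Fin n)), Continuous (fun x : (EuclideanSpace ℝ (Fin n)) => (∫ s in (0:ℝ)..(‖x - p‖), F s) * u x) :=
    fun p => (hGc.comp ((continuous_id.sub continuous_const).norm)).mul hu
  -- differentiation under the integral sign
  have hΦderiv : ∀ p₀ : (EuclideanSpace ℝ (Fin n)), HasFDerivAt (fun p : (EuclideanSpace ℝ (Fin n)) => ∫ x, (∫ s in (0:ℝ)..(‖x - p‖), F s) * u x ∂μ)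
      (∫ x, innerSL ℝ (-(V p₀ x)) ∂μ) p₀ := by
    intro p₀
    have hKne' : ((K ×ˢ Metric.closedBall p₀ 1) : Set ((EuclideanSpace ℝ (Fin n)) × (EuclideanSpace ℝ (Fin n)))).Nonempty :=
      ⟨(hKne.choose, p₀), hKne.choose_spec, Metric.mem_closedBall_self zero_le_one⟩
    have hφc : Continuous (fun z : (EuclideanSpace ℝ (Fin n)) × (EuclideanSpace ℝ (Fin n)) => |F ‖z.1 - z.2‖| * |u z.1|) :=
      ((hFc.comp ((continuous_fst.sub continuous_snd).norm)).abs).mul ((hu.comp continuous_fst).abs)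
    obtain ⟨z₀, hz₀, hmax⟩ := (hKcpt.prod (isCompact_closedBall p₀ 1)).exists_isMaxOn hKne'
      hφc.continuousOn
    have hbound : ∀ᵐ x ∂μ, ∀ q ∈ Metric.ball p₀ 1,
        ‖innerSL ℝ (-(V q x))‖ ≤ |F ‖z₀.1 - z₀.2‖| * |u z₀.1| := by
      filter_upwards [haeK] with x hx
      intro q hq
      rw [innerSL_apply_norm, norm_neg, hV]
      have m1 : (x, q) ∈ K ×ˢ Metric.closedBall p₀ 1 :=
        Set.mk_mem_prod hx (Metric.ball_subset_closedBall hq)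
      have m2 := isMaxOn_iff.mp hmax (x, q) m1
      exact (normV_le_aux F (u x) (x - q)).trans (by simpa using m2)
    have hdiff : ∀ᵐ x ∂μ, ∀ q ∈ Metric.ball p₀ 1,
        HasFDerivAt (fun p : (EuclideanSpace ℝ (Fin n)) => (∫ s in (0:ℝ)..(‖x - p‖), F s) * u x)
          (innerSL ℝ (-(V q x))) q := by
      refine Eventually.of_forall (fun x q hq => ?_)
      have h1 := (hasFDerivAt_G_norm hFc hF0 x q).mul_const (u x)
      refine h1.congr_fderiv ?_
      ext w
      simp only [hV, innerSL_apply_apply, inner_neg_left, real_inner_smul_left,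
        ContinuousLinearMap.coe_smul', Pi.smul_apply, smul_eq_mul]
      ring
    exact hasFDerivAt_integral_of_dominated_of_fderiv_le (Metric.ball_mem_nhds p₀ one_pos)
      (Eventually.of_forall fun q => (hΦc q).aestronglyMeasurable)
      (integrable_of_cont_aux hKcpt μ hμK (hΦc p₀))
      (hLcont p₀).aestronglyMeasurable
      hbound (integrable_const _) hdiff
  have hΦcont : Continuous (fun p : (EuclideanSpace ℝ (Fin n)) => ∫ x, (∫ s in (0:ℝ)..(‖x - p‖), F s) * u x ∂μ) := by
    rw [continuous_iff_continuousAt]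
    exact fun p => (hΦderiv p).continuousAt
  obtain ⟨p, hpK, hmin⟩ := hKcpt.exists_isMinOn hKne hΦcont.continuousOn
  refine ⟨p, hpK, ?_⟩
  -- first-order condition at the minimiser
  have hfo : ∀ q ∈ K, ⟪(∫ x, V p x ∂μ), q - p⟫ ≤ 0 := by
    intro q hq
    set d := q - p with hd
    have h1 : HasDerivAt (fun t : ℝ => p + t • d) d 0 := by
      simpa using ((hasDerivAt_id (0:ℝ)).smul_const d).const_add p
    have hp0 : p + (0:ℝ) • d = p := by simp
    have hΦp := hΦderiv p
    rw [← hp0] at hΦp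
    have h2 := hΦp.comp_hasDerivAt 0 h1
    rw [hp0] at h2
    have hnn : 0 ≤ (∫ x, innerSL ℝ (-(V p x)) ∂μ) d := by
      refine deriv_nonneg_of_min_aux h2 ?_
      intro t ht
      simp only [Function.comp, zero_smul, add_zero]
      have hmem : p + t • d ∈ K := by
        have hcomb : p + t • d = (1 - t) • p + t • q := by
          rw [hd]
          rw [smul_sub, sub_smul, one_smul]
          abel
        rw [hcomb]
        exact hKconv hpK hq (by linarith [ht.2]) ht.1.le (by ring)
      exact hmin hmem
    have hLd : (∫ x, innerSL ℝ (-(V p x)) ∂μ) d = -⟪(∫ x, V p x ∂μ), d⟫ := by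
      rw [ContinuousLinearMap.integral_apply (hLint p) d]
      have heq : (fun x => (innerSL ℝ (-(V p x))) d) = fun x => -⟪d, V p x⟫ := by
        funext x
        rw [innerSL_apply_apply, inner_neg_left, real_inner_comm]
      rw [heq, MeasureTheory.integral_neg, integral_inner (hVint p) d, real_inner_comm]
    rw [hLd] at hnn
    linarith
  -- conclude that the field vanishes
  show ∫ x, V p x ∂μ = 0
  rw [← real_inner_self_nonpos, ← integral_inner (hVint p) (∫ x, V p x ∂μ)]
  apply integral_nonpos_of_ae
  filter_upwards [haeK] with x hx
  have hcoef : 0 ≤ F ‖x - p‖ / ‖x - p‖ * u x :=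
    mul_nonneg (div_nonneg (hFnn _ (norm_nonneg _)) (norm_nonneg _)) (hupos x hx).le
  have hip := hfo x hx
  have hsmul : ⟪(∫ y, V p y ∂μ), V p x⟫
      = (F ‖x - p‖ / ‖x - p‖ * u x) * ⟪(∫ y, V p y ∂μ), x - p⟫ :=
    real_inner_smul_right _ _ _
  rw [hsmul]
  calc (F ‖x - p‖ / ‖x - p‖ * u x) * ⟪(∫ y, V p y ∂μ), x - p⟫
      ≤ (F ‖x - p‖ / ‖x - p‖ * u x) * 0 := mul_le_mul_of_nonneg_left hip hcoef
    _ = 0 := mul_zero _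
end
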